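/- For all monotone maps ψ : [n'] → [n] and φ : [n] → [1], letting ψ' := id_{[m]} ⊔ ψ : [m+1+n'] → [m+1+n], one has c(ψ') ∘ f_{φ∘ψ} = f_φ ∘ c(ψ') as graded maps C(m+1+n') → C(m+1+n). -/

import Mathlib

/-!
We represent the (augmented) normalized chain complex `C(N)` of the standard `N`-simplex by the
free abelian group on the finite subsets of `{0,…,N}`, a subset of cardinality `p+1` standing for
the strictly increasing `(p+1)`-tuple of its elements (a `p`-chain); the differential is the
alternating sum of the tuples obtained by deleting one entry (and vanishes on `0`-chains), and
the augmentation sends every `0`-chain basis element to `1` (and vanishes in higher degrees).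
-/

noncomputable section

abbrev Ch (α : Type) := Finset α →₀ ℤ

/-- index of `a` in `s`: the number of smaller elements of `s`. -/
def idx {α : Type} [LinearOrder α] (s : Finset α) (a : α) : ℕ :=
  (s.filter (fun b => b < a)).card

/-- value of the simplicial differential on a basis tuple:
`d(i₀,…,i_p) = Σₖ (−1)^k (i₀,…,î_k,…,i_p)` for `p ≥ 1`, and `0` on `0`-chains. -/
def dAux {α : Type} [LinearOrder α] (s : Finset α) : Ch α :=
  if 2 ≤ s.card then
    ∑ a ∈ s, ((-1 : ℤ) ^ (idx s a)) • Finsupp.single (s.erase a) (1 : ℤ)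
  else 0

/-- the differential of `C(N)`. -/
def chD (α : Type) [LinearOrder α] : Ch α →ₗ[ℤ] Ch α :=
  Finsupp.lift _ ℤ _ dAux

/-- the augmentation of `C(N)`: `e(i₀) = 1` on `0`-chains, `0` in higher degrees. -/
def chE (α : Type) : Ch α →ₗ[ℤ] ℤ :=
  Finsupp.lift _ ℤ _ (fun s => if s.card = 1 then (1 : ℤ) else 0)

/-- The chain map `c(ψ) : C(N') → C(N)` induced by a (monotone) map `ψ`,
`(i₀,…,i_p) ↦ (ψ(i₀),…,ψ(i_p))`, with the convention that a tuple with a repeated entry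
denotes `0`. -/
def chMap {α β : Type} [DecidableEq β] (ψ : α → β) : Ch α →ₗ[ℤ] Ch β :=
  Finsupp.lift _ ℤ _ (fun s =>
    if (s.image ψ).card = s.card then Finsupp.single (s.image ψ) (1 : ℤ) else 0)

/-- the element `m` of `{0,…,m+1+n}`. -/
def elM (m n : ℕ) : Fin (m+1+n+1) := ⟨m, by omega⟩

/-- `f_n` on a basis tuple `(i₀ < … < i_p)`, following the case analysis of the paper
(expressed via the sets of entries `< m` and `> m`):
`f_n = id` if `i_p ≤ m` or `m ≤ i₀`; `f_n(i₀,i₁) = (i₀,m) + (m,i₁)` if `p = 1` and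
`i₀ < m < i₁`; `f_n(i₀,…,i_p) = (m,i₁,…,i_p)` if `p > 1` and `i₀ < m < i₁`;
`f_n(i₀,…,i_p) = (i₀,…,i_{p−1},m)` if `p > 1` and `i_{p−1} < m < i_p`; `f_n = 0` otherwise
(i.e. if `i₁ ≤ m ≤ i_{p−1}`). -/
def fnAux (m n : ℕ) (s : Finset (Fin (m+1+n+1))) : Ch (Fin (m+1+n+1)) :=
  let M := elM m n
  let lo := s.filter (fun i => i < M)
  let hi := s.filter (fun i => M < i)
  if lo.card = 0 ∨ hi.card = 0 then Finsupp.single s 1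
  else if lo.card = 1 ∧ hi.card = 1 ∧ M ∉ s then
    Finsupp.single (insert M lo) 1 + Finsupp.single (insert M hi) 1
  else if lo.card = 1 ∧ 2 ≤ hi.card ∧ M ∉ s then Finsupp.single (insert M hi) 1
  else if 2 ≤ lo.card ∧ hi.card = 1 ∧ M ∉ s then Finsupp.single (insert M lo) 1
  else 0

/-- the graded `ℤ`-linear endomorphism `f_n` of `C(m+1+n)`. -/
def fN (m n : ℕ) : Ch (Fin (m+1+n+1)) →ₗ[ℤ] Ch (Fin (m+1+n+1)) :=
  Finsupp.lift _ ℤ _ (fnAux m n)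

/-- `φ̄ : [m+1+n] → [1]`, extending `φ : [n] → [1]` by `0` on `{0,…,m}`. -/
def phibar (m n : ℕ) (φ : Fin (n+1) → Fin 2) : Fin (m+1+n+1) → Fin 2 := fun i =>
  if (i : ℕ) ≤ m then 0 else φ ⟨(i : ℕ) - (m + 1), by have := i.isLt; omega⟩

/-- concatenation on the right with the fixed tuple `t`, extended `ℤ`-bilinearly, with the
repeated-entry convention (a concatenation which is not strictly increasing is `0`). -/
def concatR {α : Type} [LinearOrder α] (t : Finset α) : Ch α →ₗ[ℤ] Ch α :=
  Finsupp.lift _ ℤ _ (fun u =>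
    if ∀ x ∈ u, ∀ y ∈ t, x < y then Finsupp.single (u ∪ t) (1 : ℤ) else 0)

/-- `f_φ` on a basis tuple `s`: writing `s` as the concatenation of its prefix
`s₀ = (i₀,…,i_{k_φ})` on which `φ̄` vanishes and its suffix `s₁ = (i_{k_φ+1},…,i_p)` on which
`φ̄` equals `1`, set `f_φ(s) = f_n(s₀)·s₁` (in particular `f_φ(s) = s` when `k_φ = −1` and
`f_φ(s) = f_n(s)` when `k_φ = p`). -/
def fPhiAux (m n : ℕ) (φ : Fin (n+1) → Fin 2) (s : Finset (Fin (m+1+n+1))) :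
    Ch (Fin (m+1+n+1)) :=
  concatR (s.filter (fun i => phibar m n φ i = 1))
    (fnAux m n (s.filter (fun i => phibar m n φ i = 0)))

/-- the graded `ℤ`-linear endomorphism `f_φ` of `C(m+1+n)`. -/
def fPhi (m n : ℕ) (φ : Fin (n+1) → Fin 2) :
    Ch (Fin (m+1+n+1)) →ₗ[ℤ] Ch (Fin (m+1+n+1)) :=
  Finsupp.lift _ ℤ _ (fPhiAux m n φ)

/-- the join `φ ⊔ ψ : [m'+1+n'] → [m+1+n]` of two maps, sending `i` to `φ(i)` for `i ≤ m'`
and to `m+1+ψ(i−1−m')` for `i ≥ m'+1`. -/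
def joinFun {m' m n' n : ℕ} (φ : Fin (m'+1) → Fin (m+1)) (ψ : Fin (n'+1) → Fin (n+1)) :
    Fin (m'+1+n'+1) → Fin (m+1+n+1) := fun i =>
  if h : (i : ℕ) ≤ m' then Fin.castLE (by omega) (φ ⟨(i : ℕ), by omega⟩)
  else
    have h2 : (i : ℕ) - (m' + 1) < n' + 1 := by have := i.isLt; omega
    Fin.castLE (by omega) (Fin.natAdd (m+1) (ψ ⟨(i : ℕ) - (m' + 1), h2⟩))


lemma chMap_single {α β : Type} [DecidableEq β] (f : α → β) (s : Finset α) :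
    chMap f (Finsupp.single s (1:ℤ)) =
      if (s.image f).card = s.card then Finsupp.single (s.image f) (1:ℤ) else 0 := by
  simp [chMap, Finsupp.lift_apply, Finsupp.sum_single_index]

lemma concatR_single {α : Type} [LinearOrder α] (t u : Finset α) :
    concatR t (Finsupp.single u (1:ℤ)) =
      if ∀ x ∈ u, ∀ y ∈ t, x < y then Finsupp.single (u ∪ t) (1:ℤ) else 0 := by
  simp [concatR, Finsupp.lift_apply, Finsupp.sum_single_index]

lemma fPhi_single (m n : ℕ) (φ : Fin (n+1) → Fin 2) (s : Finset (Fin (m+1+n+1))) :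
    fPhi m n φ (Finsupp.single s (1:ℤ)) = fPhiAux m n φ s := by
  simp [fPhi, Finsupp.lift_apply, Finsupp.sum_single_index]

lemma chMap_not_injOn {α β : Type} [DecidableEq β] {f : α → β} {s : Finset α}
    (h : ¬ Set.InjOn f ↑s) : chMap f (Finsupp.single s (1:ℤ)) = 0 := by
  rw [chMap_single, if_neg]
  exact fun hc => h (Finset.card_image_iff.mp hc)

lemma chMap_concatR_single_zero {α β : Type} [LinearOrder α] [DecidableEq β] {f : α → β}
    {u : Finset α} {a b : α} (t : Finset α) (ha : a ∈ u ∨ a ∈ t) (hb : b ∈ u ∨ b ∈ t)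
    (hne : a ≠ b) (hf : f a = f b) :
    chMap f (concatR t (Finsupp.single u (1:ℤ))) = 0 := by
  rw [concatR_single]
  split_ifs with h
  · apply chMap_not_injOn
    intro hinj
    refine hne (hinj ?_ ?_ hf)
    · rw [Finset.coe_union]
      rcases ha with h' | h'
      · exact Or.inl (Finset.mem_coe.mpr h')
      · exact Or.inr (Finset.mem_coe.mpr h')
    · rw [Finset.coe_union]
      rcases hb with h' | h'
      · exact Or.inl (Finset.mem_coe.mpr h')
      · exact Or.inr (Finset.mem_coe.mpr h')
  · simp

lemma chMap_concatR_zero {α β : Type} [LinearOrder α] [DecidableEq β] {f : α → β}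
    {t : Finset α} {a b : α} (ha : a ∈ t) (hb : b ∈ t) (hne : a ≠ b)
    (hf : f a = f b) (x : Ch α) : chMap f (concatR t x) = 0 := by
  have h0 : (chMap f).comp (concatR t) = 0 := by
    apply Finsupp.lhom_ext
    intro u c
    have hc : Finsupp.single u c = c • Finsupp.single u (1:ℤ) := by
      rw [Finsupp.smul_single, smul_eq_mul, mul_one]
    simp only [LinearMap.comp_apply, LinearMap.zero_apply, hc, map_smul]
    rw [chMap_concatR_single_zero t (Or.inr ha) (Or.inr hb) hne hf, smul_zero]
  exact DFunLike.congr_fun h0 x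

lemma chMap_concatR_single {α β : Type} [LinearOrder α] [LinearOrder β] [DecidableEq β] {f : α → β}
    {V : Set α} (hmono : Monotone f) (hinj : Set.InjOn f V) {u t : Finset α}
    (hu : ↑u ⊆ V) (ht : ↑t ⊆ V) :
    chMap f (concatR t (Finsupp.single u (1:ℤ)))
      = concatR (t.image f) (Finsupp.single (u.image f) (1:ℤ)) := by
  have hlt : ∀ x ∈ u, ∀ y ∈ t, (x < y ↔ f x < f y) := by
    intro x hx y hy
    constructor
    · intro h
      exact lt_of_le_of_ne (hmono h.le)
        (fun he => h.ne (hinj (hu hx) (ht hy) he))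
    · intro h
      by_contra hc
      exact absurd (hmono (not_lt.mp hc)) (not_le.mpr h)
  have hcond : (∀ x ∈ u, ∀ y ∈ t, x < y) ↔ (∀ x ∈ u.image f, ∀ y ∈ t.image f, x < y) := by
    simp only [Finset.forall_mem_image]
    exact forall₂_congr fun x hx => forall₂_congr fun y hy => hlt x hx y hy
  rw [concatR_single, concatR_single]
  by_cases h : ∀ x ∈ u, ∀ y ∈ t, x < y
  · rw [if_pos h, if_pos (hcond.mp h), chMap_single,
      if_pos (Finset.card_image_iff.mpr (hinj.mono (by
        rw [Finset.coe_union]; exact Set.union_subset hu ht))), Finset.image_union]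
    congr 1
    exact Finset.ext fun x => by simp [Finset.mem_union]
  · rw [if_neg h, if_neg (fun hh => h (hcond.mpr hh)), map_zero]
def JJ (m : ℕ) {n' n : ℕ} (ψ : Fin (n'+1) → Fin (n+1)) :
    Fin (m+1+n'+1) → Fin (m+1+n+1) := joinFun (id : Fin (m+1) → Fin (m+1)) ψ

variable {m n' n : ℕ} {ψ : Fin (n'+1) → Fin (n+1)}

lemma JJ_coe_le {i : Fin (m+1+n'+1)} (h : (i:ℕ) ≤ m) : ((JJ m ψ i : Fin (m+1+n+1)) : ℕ) = i := by
  simp [JJ, joinFun, h]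

lemma JJ_coe_gt {i : Fin (m+1+n'+1)} (h : ¬ (i:ℕ) ≤ m) :
    ((JJ m ψ i : Fin (m+1+n+1)) : ℕ)
      = m + 1 + (ψ ⟨(i:ℕ) - (m+1), by have := i.isLt; omega⟩ : ℕ) := by
  simp [JJ, joinFun, h]

lemma JJ_le_iff {i : Fin (m+1+n'+1)} : ((JJ m ψ i : Fin (m+1+n+1)) : ℕ) ≤ m ↔ (i:ℕ) ≤ m := by
  by_cases h : (i:ℕ) ≤ m
  · simp [JJ_coe_le h, h]
  · simp [JJ_coe_gt h, h]; omega

lemma JJ_mono (hψ : Monotone ψ) : Monotone (JJ m ψ (n := n)) := by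
  intro a b hab
  rw [Fin.le_def] at hab ⊢
  by_cases ha : (a:ℕ) ≤ m
  · by_cases hb : (b:ℕ) ≤ m
    · rw [JJ_coe_le ha, JJ_coe_le hb]; exact hab
    · rw [JJ_coe_le ha, JJ_coe_gt hb]; omega
  · have hb : ¬ (b:ℕ) ≤ m := by omega
    rw [JJ_coe_gt ha, JJ_coe_gt hb]
    have := hψ (a := ⟨(a:ℕ) - (m+1), by have := a.isLt; omega⟩)
      (b := ⟨(b:ℕ) - (m+1), by have := b.isLt; omega⟩) (by simp [Fin.le_def]; omega)
    rw [Fin.le_def] at this; omega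

lemma JJ_eq_elM {i : Fin (m+1+n'+1)} : JJ m ψ i = elM m n ↔ i = elM m n' := by
  constructor
  · intro h
    have hc : ((JJ m ψ i : Fin (m+1+n+1)) : ℕ) = m := congrArg Fin.val h
    have hle : (i:ℕ) ≤ m := JJ_le_iff.mp (le_of_eq hc)
    have h2 := JJ_coe_le (ψ := ψ) hle
    exact Fin.ext (show (i:ℕ) = ((elM m n' : Fin (m+1+n'+1)) : ℕ) by show _ = m; omega)
  · rintro rfl
    exact Fin.ext (JJ_coe_le (by simp [elM]))

lemma JJ_lt_elM {i : Fin (m+1+n'+1)} : JJ m ψ i < elM m n ↔ i < elM m n' := by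
  rw [Fin.lt_def, Fin.lt_def]
  show _ < m ↔ _ < m
  by_cases h : (i:ℕ) ≤ m
  · rw [JJ_coe_le h]
  · rw [JJ_coe_gt h]; omega

lemma elM_lt_JJ {i : Fin (m+1+n'+1)} : elM m n < JJ m ψ i ↔ elM m n' < i := by
  rw [Fin.lt_def, Fin.lt_def]
  show m < _ ↔ m < _
  by_cases h : (i:ℕ) ≤ m
  · rw [JJ_coe_le h]
  · rw [JJ_coe_gt h]; omega

lemma phibar_JJ (φ : Fin (n+1) → Fin 2) (i : Fin (m+1+n'+1)) :
    phibar m n φ (JJ m ψ i) = phibar m n' (φ ∘ ψ) i := by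
  by_cases h : (i:ℕ) ≤ m
  · rw [phibar, phibar, if_pos (JJ_le_iff.mpr h), if_pos h]
  · rw [phibar, phibar, if_neg (fun hh => h (JJ_le_iff.mp hh)), if_neg h]
    simp only [Function.comp_apply]
    congr 1
    apply Fin.ext
    show ((JJ m ψ i : Fin (m+1+n+1)) : ℕ) - (m+1) = _
    rw [JJ_coe_gt (ψ := ψ) h]
    omega

lemma JJ_collide {a b : Fin (m+1+n'+1)} (hne : a ≠ b) (h : JJ m ψ a = JJ m ψ b) :
    m < (a:ℕ) ∧ m < (b:ℕ) := by
  have hc : ((JJ m ψ a : Fin (m+1+n+1)) : ℕ) = ((JJ m ψ b : Fin (m+1+n+1)) : ℕ) :=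
    congrArg Fin.val h
  by_cases ha : (a:ℕ) ≤ m
  · by_cases hb : (b:ℕ) ≤ m
    · rw [JJ_coe_le ha, JJ_coe_le hb] at hc
      exact absurd (Fin.ext hc) hne
    · rw [JJ_coe_le ha, JJ_coe_gt hb] at hc; omega
  · by_cases hb : (b:ℕ) ≤ m
    · rw [JJ_coe_gt ha, JJ_coe_le hb] at hc; omega
    · omega

lemma fnAux_def (m n : ℕ) (s : Finset (Fin (m+1+n+1))) :
    fnAux m n s =
      (if (s.filter (fun i => i < elM m n)).card = 0
          ∨ (s.filter (fun i => elM m n < i)).card = 0 then Finsupp.single s 1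
      else if (s.filter (fun i => i < elM m n)).card = 1
          ∧ (s.filter (fun i => elM m n < i)).card = 1 ∧ elM m n ∉ s then
        Finsupp.single (insert (elM m n) (s.filter (fun i => i < elM m n))) 1
          + Finsupp.single (insert (elM m n) (s.filter (fun i => elM m n < i))) 1
      else if (s.filter (fun i => i < elM m n)).card = 1
          ∧ 2 ≤ (s.filter (fun i => elM m n < i)).card ∧ elM m n ∉ s then
        Finsupp.single (insert (elM m n) (s.filter (fun i => elM m n < i))) 1
      else if 2 ≤ (s.filter (fun i => i < elM m n)).card
          ∧ (s.filter (fun i => elM m n < i)).card = 1 ∧ elM m n ∉ s then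
        Finsupp.single (insert (elM m n) (s.filter (fun i => i < elM m n))) 1
      else 0) := rfl

lemma main_inj {m n' n : ℕ} {ψ : Fin (n'+1) → Fin (n+1)} (hψ : Monotone ψ)
    {s s₀ s₁ : Finset (Fin (m+1+n'+1))} (hs₀ : s₀ ⊆ s) (hs₁ : s₁ ⊆ s)
    (hinj : Set.InjOn (JJ m ψ) (insert (elM m n') ↑s)) :
    chMap (JJ m ψ) (concatR s₁ (fnAux m n' s₀))
      = concatR (s₁.image (JJ m ψ)) (fnAux m n (s₀.image (JJ m ψ))) := by
  have hmono := JJ_mono (m := m) hψ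
  have hV : ∀ u : Finset (Fin (m+1+n'+1)), u ⊆ insert (elM m n') s₀ →
      ↑u ⊆ (insert (elM m n') ↑s : Set (Fin (m+1+n'+1))) := by
    intro u hu x hx
    have := hu hx
    rw [Finset.mem_insert] at this
    rcases this with h | h
    · exact Set.mem_insert_iff.mpr (Or.inl h)
    · exact Set.mem_insert_iff.mpr (Or.inr (hs₀ h))
  have ht : ↑s₁ ⊆ (insert (elM m n') ↑s : Set (Fin (m+1+n'+1))) := by
    intro x hx; exact Set.mem_insert_iff.mpr (Or.inr (hs₁ hx))
  have E' : ∀ u : Finset (Fin (m+1+n'+1)), u ⊆ insert (elM m n') s₀ →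
      chMap (JJ m ψ) (concatR s₁ (Finsupp.single u (1:ℤ)))
        = concatR (s₁.image (JJ m ψ)) (Finsupp.single (u.image (JJ m ψ)) (1:ℤ)) :=
    fun u hu => chMap_concatR_single hmono hinj (hV u hu) ht
  have hsub : (↑s₀ : Set (Fin (m+1+n'+1))) ⊆ insert (elM m n') ↑s :=
    hV s₀ (Finset.subset_insert _ _)
  have hLO : (s₀.image (JJ m ψ)).filter (fun i => i < elM m n)
      = (s₀.filter (fun i => i < elM m n')).image (JJ m ψ) := by
    rw [Finset.filter_image]
    congr 1
    apply Finset.filter_congr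
    intro x _
    simp [JJ_lt_elM]
  have hHI : (s₀.image (JJ m ψ)).filter (fun i => elM m n < i)
      = (s₀.filter (fun i => elM m n' < i)).image (JJ m ψ) := by
    rw [Finset.filter_image]
    congr 1
    apply Finset.filter_congr
    intro x _
    simp [elM_lt_JJ]
  have hclo : ((s₀.filter (fun i => i < elM m n')).image (JJ m ψ)).card
      = (s₀.filter (fun i => i < elM m n')).card :=
    Finset.card_image_of_injOn (hinj.mono (fun x hx => hsub (Finset.filter_subset _ _ hx)))
  have hchi : ((s₀.filter (fun i => elM m n' < i)).image (JJ m ψ)).card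
      = (s₀.filter (fun i => elM m n' < i)).card :=
    Finset.card_image_of_injOn (hinj.mono (fun x hx => hsub (Finset.filter_subset _ _ hx)))
  have hMnot : (elM m n ∉ s₀.image (JJ m ψ)) = (elM m n' ∉ s₀) := by
    simp only [Finset.mem_image, JJ_eq_elM, exists_eq_right]
  have hJM : JJ m ψ (elM m n') = elM m n := JJ_eq_elM.mpr rfl
  rw [fnAux_def m n', fnAux_def m n, hLO, hHI]
  simp only [hclo, hchi, hMnot]
  split_ifs with h1 h2 h3 h4
  · rw [E' s₀ (Finset.subset_insert _ _)]
  · rw [map_add, map_add, map_add,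
      E' _ (Finset.insert_subset_insert _ (Finset.filter_subset _ _)),
      E' _ (Finset.insert_subset_insert _ (Finset.filter_subset _ _)),
      Finset.image_insert, Finset.image_insert, hJM]
  · rw [E' _ (Finset.insert_subset_insert _ (Finset.filter_subset _ _)),
      Finset.image_insert, hJM]
  · rw [E' _ (Finset.insert_subset_insert _ (Finset.filter_subset _ _)),
      Finset.image_insert, hJM]
  · rw [map_zero, map_zero, map_zero]

lemma fin_two_cases (x : Fin 2) : x = 0 ∨ x = 1 := by
  revert x; decide

lemma key_single {m n' n : ℕ} {ψ : Fin (n'+1) → Fin (n+1)} (hψ : Monotone ψ)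
    (φ : Fin (n+1) → Fin 2) (s : Finset (Fin (m+1+n'+1))) :
    chMap (JJ m ψ) (fPhiAux m n' (φ ∘ ψ) s)
      = fPhi m n φ (chMap (JJ m ψ) (Finsupp.single s (1:ℤ))) := by
  rw [chMap_single]
  by_cases hinj : (s.image (JJ m ψ)).card = s.card
  · rw [if_pos hinj, fPhi_single]
    have hinj' : Set.InjOn (JJ m ψ) ↑s := Finset.card_image_iff.mp hinj
    have hinsert : Set.InjOn (JJ m ψ) (insert (elM m n') ↑s) := by
      intro a ha b hb hab
      rcases Set.mem_insert_iff.mp ha with rfl | ha'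
      · rcases Set.mem_insert_iff.mp hb with rfl | hb'
        · rfl
        · exact (JJ_eq_elM.mp (by rw [← hab]; exact JJ_eq_elM.mpr rfl)).symm
      · rcases Set.mem_insert_iff.mp hb with rfl | hb'
        · exact JJ_eq_elM.mp (by rw [hab]; exact JJ_eq_elM.mpr rfl)
        · exact hinj' ha' hb' hab
    rw [fPhiAux, fPhiAux]
    have h0 : (s.image (JJ m ψ)).filter (fun i => phibar m n φ i = 0)
        = (s.filter (fun i => phibar m n' (φ ∘ ψ) i = 0)).image (JJ m ψ) := by
      rw [Finset.filter_image]
      congr 1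
      apply Finset.filter_congr
      intro x _
      simp [phibar_JJ]
    have h1 : (s.image (JJ m ψ)).filter (fun i => phibar m n φ i = 1)
        = (s.filter (fun i => phibar m n' (φ ∘ ψ) i = 1)).image (JJ m ψ) := by
      rw [Finset.filter_image]
      congr 1
      apply Finset.filter_congr
      intro x _
      simp [phibar_JJ]
    rw [h0, h1]
    exact main_inj hψ (Finset.filter_subset _ _) (Finset.filter_subset _ _) hinsert
  · rw [if_neg hinj, map_zero]
    have hni : ¬ Set.InjOn (JJ m ψ) ↑s := fun h => hinj (Finset.card_image_iff.mpr h)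
    rw [Set.InjOn] at hni
    push_neg at hni
    obtain ⟨a, ha, b, hb, hab, hne⟩ := hni
    have ha : a ∈ s := Finset.mem_coe.mp ha
    have hb : b ∈ s := Finset.mem_coe.mp hb
    have hm := JJ_collide hne hab
    have hphi : phibar m n' (φ ∘ ψ) a = phibar m n' (φ ∘ ψ) b := by
      rw [← phibar_JJ, ← phibar_JJ, hab]
    rw [fPhiAux]
    rcases fin_two_cases (phibar m n' (φ ∘ ψ) a) with hv | hv
    · have ha0 : a ∈ s.filter (fun i => phibar m n' (φ ∘ ψ) i = 0) :=
        Finset.mem_filter.mpr ⟨ha, hv⟩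
      have hb0 : b ∈ s.filter (fun i => phibar m n' (φ ∘ ψ) i = 0) :=
        Finset.mem_filter.mpr ⟨hb, by rw [← hphi]; exact hv⟩
      have haM : elM m n' < a := Fin.lt_def.mpr hm.1
      have hbM : elM m n' < b := Fin.lt_def.mpr hm.2
      have hahi : a ∈ (s.filter (fun i => phibar m n' (φ ∘ ψ) i = 0)).filter
          (fun i => elM m n' < i) := Finset.mem_filter.mpr ⟨ha0, haM⟩
      have hbhi : b ∈ (s.filter (fun i => phibar m n' (φ ∘ ψ) i = 0)).filter
          (fun i => elM m n' < i) := Finset.mem_filter.mpr ⟨hb0, hbM⟩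
      have hcard2 : 1 < ((s.filter (fun i => phibar m n' (φ ∘ ψ) i = 0)).filter
          (fun i => elM m n' < i)).card := Finset.one_lt_card.mpr ⟨a, hahi, b, hbhi, hne⟩
      rw [fnAux_def]
      split_ifs with h1 h2 h3 h4
      · exact chMap_concatR_single_zero _ (Or.inl ha0) (Or.inl hb0) hne hab
      · omega
      · exact chMap_concatR_single_zero _
          (Or.inl (Finset.mem_insert_of_mem hahi))
          (Or.inl (Finset.mem_insert_of_mem hbhi)) hne hab
      · omega
      · rw [map_zero, map_zero]
    · exact chMap_concatR_zero (Finset.mem_filter.mpr ⟨ha, hv⟩)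
        (Finset.mem_filter.mpr ⟨hb, by rw [← hphi]; exact hv⟩) hne hab _


/-- STATEMENT 14: for all monotone maps `ψ : [n'] → [n]` and `φ : [n] → [1]`, with
`ψ' := id_{[m]} ⊔ ψ`, one has `c(ψ') ∘ f_{φ∘ψ} = f_φ ∘ c(ψ')`. -/
theorem fPhi_natural {n' : ℕ} (m n : ℕ) (ψ : Fin (n'+1) →o Fin (n+1)) (φ : Fin (n+1) →o Fin 2) :
    (chMap (joinFun (id : Fin (m+1) → Fin (m+1)) ⇑ψ)).comp (fPhi m n' ⇑(φ.comp ψ)) =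
      (fPhi m n ⇑φ).comp (chMap (joinFun (id : Fin (m+1) → Fin (m+1)) ⇑ψ)) := by
  apply Finsupp.lhom_ext
  intro s c
  have hJ : joinFun (id : Fin (m+1) → Fin (m+1)) ⇑ψ = JJ m ⇑ψ := rfl
  have hsingle : (Finsupp.single s c : Ch (Fin (m+1+n'+1)))
      = c • Finsupp.single s (1:ℤ) := by
    rw [Finsupp.smul_single, smul_eq_mul, mul_one]
  simp only [LinearMap.comp_apply, hsingle, map_smul]
  congr 1
  rw [hJ, fPhi_single, OrderHom.comp_coe]
  exact key_single ψ.monotone ⇑φ s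

end
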